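/- For β > 0, the function W : GL⁺(2) → ℝ defined by W(F) = (‖F‖² / det F)^β, where ‖·‖ denotes the Frobenius norm, is polyconvex if and only if β ≥ 1, and rank-one convex if and only if β ≥ 1. -/

import Mathlib

open Matrix Set

noncomputable section

/-- The space of real 2×2 matrices. -/
abbrev Mat2 : Type := Matrix (Fin 2) (Fin 2) ℝ

/-- The special orthogonal group SO(2): orthogonal 2×2 matrices with determinant 1. -/
def SO2 : Set Mat2 := {Q : Mat2 | Qᵀ * Q = 1 ∧ Q.det = 1}

/-- A function `W` (viewed on GL⁺(2) = {F | 0 < det F}) is polyconvex if there is a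
convex function `P : ℝ^{2×2} × ℝ → ℝ ∪ {+∞}` with `W F = P (F, det F)` on GL⁺(2). -/
def Polyconvex (W : Mat2 → ℝ) : Prop :=
  ∃ P : Mat2 × ℝ → EReal,
    (∀ x y : Mat2 × ℝ, ∀ a b : ℝ, 0 ≤ a → 0 ≤ b → a + b = 1 →
      P (a • x + b • y) ≤ (a : EReal) * P x + (b : EReal) * P y) ∧
    (∀ F : Mat2, 0 < F.det → (W F : EReal) = P (F, F.det))

/-- Rank-one convexity of `W` on GL⁺(2): convexity along rank-one line segments
lying in GL⁺(2). -/
def RankOneConvex (W : Mat2 → ℝ) : Prop :=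
  ∀ F : Mat2, 0 < F.det → ∀ ξ η : Fin 2 → ℝ, ∀ θ : ℝ, θ ∈ Set.Icc (0:ℝ) 1 →
    (∀ t ∈ Set.Icc (0:ℝ) 1, 0 < (F + t • vecMulVec ξ η).det) →
    W (F + (1 - θ) • vecMulVec ξ η) ≤ θ * W F + (1 - θ) * W (F + vecMulVec ξ η)

/-- Objectivity and isotropy: bi-SO(2)-invariance on GL⁺(2). -/
def ObjectiveIsotropic (W : Mat2 → ℝ) : Prop :=
  ∀ F : Mat2, 0 < F.det → ∀ Q₁ Q₂ : Mat2, Q₁ ∈ SO2 → Q₂ ∈ SO2 →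
    W (Q₁ * F * Q₂) = W F

/-- Isochoric: invariance under positive scaling on GL⁺(2). -/
def Isochoric (W : Mat2 → ℝ) : Prop :=
  ∀ F : Mat2, 0 < F.det → ∀ a : ℝ, 0 < a → W (a • F) = W F

/-- The 2×2 diagonal matrix diag(a, b). -/
def diag2 (a b : ℝ) : Mat2 := !![a, 0; 0, b]

/-- The squared Frobenius norm of a 2×2 matrix. -/
def frobSq (F : Mat2) : ℝ := ∑ i, ∑ j, (F i j) ^ 2

/-- The operator norm of `F` induced by the Euclidean norm on ℝ²:
the supremum of ‖F·x‖ over Euclidean-unit vectors x. -/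
def opNorm2 (F : Mat2) : ℝ :=
  sSup {r : ℝ | ∃ x : Fin 2 → ℝ, (x 0) ^ 2 + (x 1) ^ 2 = 1 ∧
    r = Real.sqrt ((F.mulVec x 0) ^ 2 + (F.mulVec x 1) ^ 2)}


lemma qol4 (d e : ℝ) (hd : 0<d) (he : 0<e) (x1 x2 x3 x4 y1 y2 y3 y4 : ℝ) :
    ((x1+y1)^2+((x2+y2)^2+((x3+y3)^2+(x4+y4)^2)))/(d+e) ≤
      (x1^2+(x2^2+(x3^2+x4^2)))/d + (y1^2+(y2^2+(y3^2+y4^2)))/e := by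
  rw [div_add_div _ _ hd.ne' he.ne', div_le_div_iff₀ (by positivity) (by positivity)]
  nlinarith [sq_nonneg (x1*e - y1*d), sq_nonneg (x2*e - y2*d), sq_nonneg (x3*e - y3*d),
    sq_nonneg (x4*e - y4*d), mul_pos hd he]

lemma frobSq_nonneg (F : Mat2) : 0 ≤ frobSq F := by
  unfold frobSq; positivity

lemma qolM (a b d e : ℝ) (ha : 0 < a) (hb : 0 < b) (hd : 0 < d) (he : 0 < e)
    (F G : Mat2) :
    frobSq (a • F + b • G) / (a * d + b * e) ≤ a * (frobSq F / d) + b * (frobSq G / e) := by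
  have h := qol4 (a*d) (b*e) (by positivity) (by positivity)
    (a * F 0 0) (a * F 0 1) (a * F 1 0) (a * F 1 1)
    (b * G 0 0) (b * G 0 1) (b * G 1 0) (b * G 1 1)
  have e1 : frobSq (a • F + b • G) =
      (a * F 0 0 + b * G 0 0)^2 + ((a * F 0 1 + b * G 0 1)^2 +
      ((a * F 1 0 + b * G 1 0)^2 + (a * F 1 1 + b * G 1 1)^2)) := by
    simp [frobSq, Fin.sum_univ_two, Matrix.add_apply, Matrix.smul_apply, smul_eq_mul]; ring
  have e2 : ((a * F 0 0)^2+((a * F 0 1)^2+((a * F 1 0)^2+(a * F 1 1)^2)))/(a*d)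
      = a * (frobSq F / d) := by
    rw [frobSq]; field_simp [Fin.sum_univ_two]; ring; simp only [Fin.sum_univ_two]; ring
  have e3 : ((b * G 0 0)^2+((b * G 0 1)^2+((b * G 1 0)^2+(b * G 1 1)^2)))/(b*e)
      = b * (frobSq G / e) := by
    rw [frobSq]; field_simp [Fin.sum_univ_two]; ring; simp only [Fin.sum_univ_two]; ring
  rw [e1]; rw [e2, e3] at h; exact h

def Paux (β : ℝ) (x : Mat2 × ℝ) : EReal :=
  if 0 < x.2 then (((frobSq x.1 / x.2) ^ β : ℝ) : EReal) else ⊤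

lemma Paux_ne_bot (β : ℝ) (x : Mat2 × ℝ) : Paux β x ≠ ⊥ := by
  unfold Paux; split
  · exact EReal.coe_ne_bot _
  · simp

lemma coe_mul_ne_bot (a : ℝ) (ha : 0 ≤ a) (y : EReal) (hy : y ≠ ⊥) : (a:EReal) * y ≠ ⊥ := by
  induction y with
  | bot => exact absurd rfl hy
  | coe r => rw [← EReal.coe_mul]; exact EReal.coe_ne_bot _
  | top =>
    rcases ha.eq_or_lt with rfl | h
    · simp
    · rw [EReal.coe_mul_top_of_pos h]; simp

lemma poly_of (β : ℝ) (hβ : 0 < β) (hβ1 : 1 ≤ β) :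
    Polyconvex (fun F => (frobSq F / F.det) ^ β) := by
  refine ⟨Paux β, ?_, ?_⟩
  · rintro ⟨F, d⟩ ⟨G, e⟩ a b ha hb hab
    rcases ha.eq_or_lt with rfl | ha'
    · have hb1 : b = 1 := by linarith
      subst hb1; simp
    rcases hb.eq_or_lt with rfl | hb'
    · have ha1 : a = 1 := by linarith
      subst ha1; simp
    by_cases hd : 0 < d
    · by_cases he : 0 < e
      · have hpos : 0 < a * d + b * e := by positivity
        have hsum : (a • (F, d) + b • (G, e) : Mat2 × ℝ) = (a • F + b • G, a * d + b * e) := by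
          simp [Prod.ext_iff, smul_eq_mul]
        rw [hsum]
        unfold Paux
        simp only [hd, he, hpos, if_pos]
        rw [← EReal.coe_mul, ← EReal.coe_mul, ← EReal.coe_add, EReal.coe_le_coe_iff]
        have h1 : frobSq (a • F + b • G) / (a * d + b * e) ≤
            a * (frobSq F / d) + b * (frobSq G / e) := qolM a b d e ha' hb' hd he F G
        have h0 : 0 ≤ frobSq (a • F + b • G) / (a * d + b * e) := by
          have := frobSq_nonneg (a • F + b • G); positivity
        calc (frobSq (a • F + b • G) / (a * d + b * e)) ^ β
            ≤ (a * (frobSq F / d) + b * (frobSq G / e)) ^ β :=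
              Real.rpow_le_rpow h0 h1 hβ.le
          _ ≤ a * (frobSq F / d) ^ β + b * (frobSq G / e) ^ β := by
              have hu : frobSq F / d ∈ Set.Ici (0:ℝ) :=
                div_nonneg (frobSq_nonneg F) hd.le
              have hv : frobSq G / e ∈ Set.Ici (0:ℝ) :=
                div_nonneg (frobSq_nonneg G) he.le
              simpa [smul_eq_mul] using (convexOn_rpow hβ1).2 hu hv ha hb hab
      · have hPy : Paux β (G, e) = ⊤ := if_neg he
        rw [hPy, EReal.coe_mul_top_of_pos hb',
          EReal.add_top_of_ne_bot (coe_mul_ne_bot a ha _ (Paux_ne_bot β _))]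
        exact le_top
    · have hPx : Paux β (F, d) = ⊤ := if_neg hd
      rw [hPx, EReal.coe_mul_top_of_pos ha',
        EReal.top_add_of_ne_bot (coe_mul_ne_bot b hb _ (Paux_ne_bot β _))]
      exact le_top
  · intro F hF
    simp [Paux, hF]

lemma det_rankone_affine (F : Mat2) (ξ η : Fin 2 → ℝ) (t : ℝ) :
    (F + t • vecMulVec ξ η).det = (1 - t) * F.det + t * (F + vecMulVec ξ η).det := by
  simp [Matrix.det_fin_two, Matrix.add_apply, Matrix.smul_apply, vecMulVec_apply, smul_eq_mul]
  ring

lemma rank_one_of_poly (W : Mat2 → ℝ) (h : Polyconvex W) : RankOneConvex W := by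
  obtain ⟨P, hconv, heval⟩ := h
  intro F hF ξ η θ hθ hseg
  set B := vecMulVec ξ η
  have h0 : 0 < F.det := hF
  have h1 : 0 < (F + B).det := by
    have := hseg 1 ⟨zero_le_one, le_refl 1⟩
    simpa using this
  have hm : 0 < (F + (1-θ) • B).det := hseg (1-θ) ⟨by linarith [hθ.2], by linarith [hθ.1]⟩
  have key := hconv (F, F.det) (F + B, (F + B).det) θ (1-θ) hθ.1 (by linarith [hθ.2]) (by ring)
  have hcomb : (θ • (F, F.det) + (1-θ) • (F + B, (F + B).det) : Mat2 × ℝ)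
      = (F + (1-θ) • B, (F + (1-θ) • B).det) := by
    rw [Prod.ext_iff]
    constructor
    · show θ • F + (1-θ) • (F + B) = F + (1-θ) • B
      ext i j
      simp [Matrix.add_apply, Matrix.smul_apply, smul_eq_mul]
      ring
    · show θ * F.det + (1-θ) * (F + B).det = (F + (1-θ) • B).det
      rw [det_rankone_affine F ξ η (1-θ)]
      ring
  rw [hcomb, ← heval _ hm, ← heval _ h0, ← heval _ h1] at key
  rw [← EReal.coe_mul, ← EReal.coe_mul, ← EReal.coe_add, EReal.coe_le_coe_iff] at key
  exact key

lemma wval (β x : ℝ) :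
    (frobSq !![x,0;0,1] / (!![x,0;0,1] : Mat2).det) ^ β = ((x^2+1)/x) ^ β := by
  have h1 : frobSq !![x,0;0,1] = x^2+1 := by
    simp [frobSq, Fin.sum_univ_two]
  have h2 : (!![x,0;0,1] : Mat2).det = x := by
    simp [Matrix.det_fin_two]
  rw [h1, h2]

lemma mat_comb (x y s : ℝ) :
    (!![x,0;0,1] : Mat2) + s • (!![y,0;0,0] : Mat2) = !![x + s*y,0;0,1] := by
  ext i j
  fin_cases i <;> fin_cases j <;>
    simp [Matrix.add_apply, Matrix.smul_apply, smul_eq_mul]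

lemma mat_add (x y : ℝ) :
    (!![x,0;0,1] : Mat2) + (!![y,0;0,0] : Mat2) = !![x + y,0;0,1] := by
  ext i j
  fin_cases i <;> fin_cases j <;> simp [Matrix.add_apply]

lemma vecmul_eq (y : ℝ) : vecMulVec ![y, 0] ![1, 0] = (!![y,0;0,0] : Mat2) := by
  ext i j; fin_cases i <;> fin_cases j <;> simp [vecMulVec_apply]


set_option maxHeartbeats 1000000 in
lemma one_le_of_rank_one (β : ℝ) (hβ : 0 < β)
    (h : RankOneConvex (fun F => (frobSq F / F.det) ^ β)) : 1 ≤ β := by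
  by_contra hlt
  push_neg at hlt
  -- choose c1 > 0 with 2^(1-β) = 1 + c1
  obtain ⟨c1, hc1, hc1eq⟩ : ∃ c : ℝ, 0 < c ∧ (2:ℝ) ^ (1-β) = 1 + c := by
    refine ⟨2 ^ (1-β) - 1, ?_, by ring⟩
    have : (1:ℝ) < 2 ^ (1-β) :=
      (Real.one_lt_rpow_iff_of_pos (by norm_num)).mpr (Or.inl ⟨by norm_num, by linarith⟩)
    linarith
  -- choose k > 1 with c1⁻¹ < k^β
  obtain ⟨k, hk1, hkc⟩ : ∃ k : ℝ, 1 < k ∧ c1⁻¹ < k ^ β := by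
    refine ⟨max 1 (c1⁻¹ ^ β⁻¹) + 1, by linarith [le_max_left 1 (c1⁻¹ ^ β⁻¹)], ?_⟩
    have hbase : c1⁻¹ ^ β⁻¹ < max 1 (c1⁻¹ ^ β⁻¹) + 1 := by
      linarith [le_max_right 1 (c1⁻¹ ^ β⁻¹)]
    have h0 : (0:ℝ) ≤ c1⁻¹ ^ β⁻¹ := Real.rpow_nonneg (by positivity) _
    have := Real.rpow_lt_rpow h0 hbase hβ
    rwa [← Real.rpow_mul (by positivity), inv_mul_cancel₀ hβ.ne', Real.rpow_one] at this
  have hk0 : 0 < k := by linarith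
  have hkβ0 : 0 < k ^ β := Real.rpow_pos_of_pos hk0 β
  have hhalf : (1 + k ^ β)/2 < (k/2) ^ β := by
    have e4 : (k/2) ^ β = k ^ β / 2 ^ β := Real.div_rpow hk0.le (by norm_num) β
    have e5 : (2:ℝ) ^ (1-β) = 2 / 2 ^ β := by
      rw [Real.rpow_sub (by norm_num), Real.rpow_one]
    have h2β : (0:ℝ) < 2 ^ β := Real.rpow_pos_of_pos (by norm_num) β
    have hck : 1 < c1 * k ^ β := by
      calc (1:ℝ) = c1 * c1⁻¹ := by field_simp
        _ < c1 * k ^ β := mul_lt_mul_of_pos_left hkc hc1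
    have key : 1 + k ^ β < 2 ^ (1-β) * k ^ β := by
      rw [hc1eq]; nlinarith
    rw [e4]
    rw [e5] at key
    rw [div_lt_div_iff₀ (by norm_num) h2β]
    calc (1 + k ^ β) * 2 ^ β < (2 / 2 ^ β * k ^ β) * 2 ^ β :=
          mul_lt_mul_of_pos_right key h2β
      _ = k ^ β * 2 := by field_simp
  -- the concavity gap
  obtain ⟨γ, hγ, hγeq⟩ : ∃ g : ℝ, 0 < g ∧ ((1+k)/2) ^ β = (1 + k ^ β)/2 + g := by
    refine ⟨((1+k)/2) ^ β - (1 + k ^ β)/2, ?_, by ring⟩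
    have hmono : (k/2) ^ β ≤ ((1+k)/2) ^ β :=
      Real.rpow_le_rpow (by positivity) (by linarith) hβ.le
    linarith
  -- choose t with (1 + k^β)/(2γ) < t²
  obtain ⟨t, ht1, htX⟩ : ∃ t : ℝ, 1 < t ∧ (1 + k ^ β)/(2*γ) < t ^ 2 := by
    set X : ℝ := (1 + k ^ β)/(2*γ) with hXdef
    have hX0 : 0 ≤ X := by positivity
    refine ⟨max 1 (Real.sqrt X) + 1, by linarith [le_max_left 1 (Real.sqrt X)], ?_⟩
    have hs : Real.sqrt X < max 1 (Real.sqrt X) + 1 := by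
      linarith [le_max_right 1 (Real.sqrt X)]
    calc X = Real.sqrt X ^ 2 := (Real.sq_sqrt hX0).symm
      _ < _ := by nlinarith [Real.sqrt_nonneg X]
  have ht0 : 0 < t := by linarith
  -- rank-one test
  have hdetF : (!![t,0;0,1] : Mat2).det = t := by simp [Matrix.det_fin_two]
  have hseg : ∀ s ∈ Set.Icc (0:ℝ) 1,
      0 < ((!![t,0;0,1] : Mat2) + s • vecMulVec ![(k-1)*t, 0] ![1, 0]).det := by
    intro s hs
    rw [vecmul_eq, mat_comb]
    have hd : (!![t + s*((k-1)*t),0;0,1] : Mat2).det = t + s*((k-1)*t) := by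
      simp [Matrix.det_fin_two]
    rw [hd]
    have h1 : 0 ≤ s * ((k-1)*t) :=
      mul_nonneg hs.1 (mul_nonneg (by linarith) ht0.le)
    linarith
  have key := h !![t,0;0,1] (by rw [hdetF]; exact ht0) ![(k-1)*t, 0] ![1, 0] (1/2)
    ⟨by norm_num, by norm_num⟩ hseg
  rw [vecmul_eq, mat_comb, mat_add] at key
  simp only at key
  have e7 : t + (1 - 1/2)*((k-1)*t) = (1+k)*t/2 := by ring
  have e8 : t + (k-1)*t = k*t := by ring
  rw [e7, e8, wval β ((1+k)*t/2), wval β (k*t), wval β t] at key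
  -- numeric contradiction
  have hm0 : 0 < (1+k)*t/2 := by positivity
  have hA : ((1+k)/2) ^ β * t ^ β ≤ ((((1+k)*t/2)^2+1)/((1+k)*t/2)) ^ β := by
    have h1 : ((1+k)/2) * t ≤ (((1+k)*t/2)^2+1)/((1+k)*t/2) := by
      rw [le_div_iff₀ hm0]; nlinarith
    calc ((1+k)/2) ^ β * t ^ β = (((1+k)/2) * t) ^ β :=
          (Real.mul_rpow (by positivity) ht0.le).symm
      _ ≤ _ := Real.rpow_le_rpow (by positivity) h1 hβ.le
  have bound : ∀ x : ℝ, 1 ≤ x → t ≤ x → ((x^2+1)/x) ^ β ≤ x ^ β * (1 + 1/t^2) := by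
    intro x hx1 htx
    have hx0 : 0 < x := by linarith
    have hxβ : 0 < x ^ β := Real.rpow_pos_of_pos hx0 β
    have e1 : (x^2+1)/x = x * (1 + 1/x^2) := by field_simp
    have e2 : ((x^2+1)/x) ^ β = x ^ β * (1 + 1/x^2) ^ β := by
      rw [e1, Real.mul_rpow hx0.le (by positivity)]
    rw [e2]
    have h3 : (1 + 1/x^2 : ℝ) ^ β ≤ (1 + 1/x^2) ^ (1:ℝ) :=
      Real.rpow_le_rpow_of_exponent_le (le_add_of_nonneg_right (by positivity)) hlt.le
    rw [Real.rpow_one] at h3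
    have h4 : 1/x^2 ≤ 1/t^2 := by
      rw [div_le_div_iff₀ (pow_pos hx0 2) (pow_pos ht0 2)]
      nlinarith
    calc x ^ β * (1 + 1/x^2) ^ β ≤ x ^ β * (1 + 1/x^2) :=
          mul_le_mul_of_nonneg_left h3 hxβ.le
      _ ≤ x ^ β * (1 + 1/t^2) := mul_le_mul_of_nonneg_left (by linarith) hxβ.le
  have hBt : ((t^2+1)/t) ^ β ≤ t ^ β * (1 + 1/t^2) := bound t ht1.le le_rfl
  have hBkt : (((k*t)^2+1)/(k*t)) ^ β ≤ (k ^ β * t ^ β) * (1 + 1/t^2) := by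
    have hkt1 : (1:ℝ) ≤ k*t := by nlinarith [mul_pos (sub_pos.mpr hk1) (sub_pos.mpr ht1)]
    have hkt2 : t ≤ k*t := by nlinarith [mul_pos (sub_pos.mpr hk1) ht0]
    have := bound (k*t) hkt1 hkt2
    rwa [Real.mul_rpow hk0.le ht0.le] at this
  have htβ : 0 < t ^ β := Real.rpow_pos_of_pos ht0 β
  have final : ((1+k)/2) ^ β * t ^ β ≤ (1 + k ^ β)/2 * t ^ β * (1 + 1/t^2) := by
    calc ((1+k)/2) ^ β * t ^ β ≤ ((((1+k)*t/2)^2+1)/((1+k)*t/2)) ^ β := hA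
      _ ≤ 1/2 * ((t^2+1)/t) ^ β + (1 - 1/2) * (((k*t)^2+1)/(k*t)) ^ β := key
      _ ≤ 1/2 * (t ^ β * (1 + 1/t^2)) + 1/2 * ((k ^ β * t ^ β) * (1 + 1/t^2)) := by
          rw [show (1 - 1/2 : ℝ) = 1/2 by norm_num]
          gcongr
      _ = (1 + k ^ β)/2 * t ^ β * (1 + 1/t^2) := by ring
  have ht2 : (0:ℝ) < t^2 := by positivity
  have hred : ((1+k)/2) ^ β ≤ (1 + k ^ β)/2 * (1 + 1/t^2) := by
    nlinarith [final, htβ]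
  have hγle : γ ≤ (1 + k ^ β)/(2*t^2) := by
    rw [hγeq] at hred
    have expand : (1 + k ^ β)/2 * (1 + 1/t^2) = (1 + k ^ β)/2 + (1 + k ^ β)/(2*t^2) := by
      field_simp
    rw [expand] at hred
    linarith
  rw [div_lt_iff₀ (by positivity)] at htX
  rw [le_div_iff₀ (by positivity)] at hγle
  nlinarith [hγle, htX, hγ, ht2]

/-- for `β > 0`, the function `F ↦ (‖F‖²/det F)^β` (Frobenius norm)
is polyconvex iff `β ≥ 1` and rank-one convex iff `β ≥ 1`. -/
theorem frobSq_div_det_power_polyconvex_iff (β : ℝ) (hβ : 0 < β) :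
    (Polyconvex (fun F => (frobSq F / F.det) ^ β) ↔ 1 ≤ β) ∧
    (RankOneConvex (fun F => (frobSq F / F.det) ^ β) ↔ 1 ≤ β) := by
  constructor
  · constructor
    · intro hp
      exact one_le_of_rank_one β hβ (rank_one_of_poly _ hp)
    · intro h1
      exact poly_of β hβ h1
  · constructor
    · intro hr
      exact one_le_of_rank_one β hβ hr
    · intro h1
      exact rank_one_of_poly _ (poly_of β hβ h1)
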